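/- arXiv:2004.00474 — 6 statements merged into one kernel-verified Lean document; each statement's English description precedes it below -/
import Mathlib

section
/- For any integers i ≥ 1 and t ≥ 0, the determinant of the (t+1)×(t+1) matrix D(i,t) with entries D(i,t)_{p,q} = 1/(i + 2(p-1) + 2(q-1)) is positive. -/
set_option maxHeartbeats 1000000
open MeasureTheory intervalIntegral Polynomial Finset ENNReal

theorem stmt_1 (i : ℕ) (hi : 1 ≤ i) (t : ℕ) :
    0 < Matrix.det (fun p q : Fin (t + 1) =>
      (1 : ℝ) / (i + 2 * (p : ℕ) + 2 * (q : ℕ))) := by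
  set M : Matrix (Fin (t+1)) (Fin (t+1)) ℝ :=
    fun p q => (1:ℝ) / (i + 2*(p:ℕ) + 2*(q:ℕ)) with hM
  have hMsymm : M.IsHermitian := by
    ext p q
    rw [Matrix.conjTranspose_apply]
    simp only [hM, Matrix.conjTranspose_apply, star_trivial]
    ring_nf
  have hcast : ∀ p q : Fin (t+1),
      ((i - 1 + 2*(p:ℕ) + 2*(q:ℕ) : ℕ) : ℝ) + 1 = (i : ℝ) + 2*(p:ℕ) + 2*(q:ℕ) := by
    intro p q
    have : (i - 1 : ℕ) + 1 = i := Nat.succ_pred_eq_of_pos hi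
    push_cast [Nat.cast_sub hi]
    ring
  have hden : ∀ p q : Fin (t+1), (0:ℝ) < (i : ℝ) + 2*(p:ℕ) + 2*(q:ℕ) := by
    intro p q
    have : (1:ℝ) ≤ i := by exact_mod_cast hi
    positivity
  have hpos : M.PosDef := by
    refine Matrix.PosDef.of_dotProduct_mulVec_pos hMsymm fun v hv => ?_
    have key : dotProduct (star v) (M.mulVec v)
        = ∫ x in (0:ℝ)..1, x^(i-1) * (∑ p, v p * x^(2*(p:ℕ)))^2 := by
      have expand : ∀ x : ℝ, x^(i-1) * (∑ p, v p * x^(2*(p:ℕ)))^2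
          = ∑ p, ∑ q, (v p * v q) * x^(i - 1 + 2*(p:ℕ) + 2*(q:ℕ)) := by
        intro x
        rw [sq, Finset.sum_mul_sum, Finset.mul_sum]
        refine Finset.sum_congr rfl fun p _ => ?_
        rw [Finset.mul_sum]
        refine Finset.sum_congr rfl fun q _ => ?_
        rw [pow_add, pow_add]
        ring
      have hint : ∀ (p q : Fin (t+1)), IntervalIntegrable
          (fun x : ℝ => (v p * v q) * x^(i - 1 + 2*(p:ℕ) + 2*(q:ℕ))) volume 0 1 :=
        fun p q => ((continuous_const.mul (continuous_pow _)).intervalIntegrable 0 1)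
      simp only [expand]
      have step1 : (∫ x in (0:ℝ)..1, ∑ p, ∑ q, (v p * v q) * x^(i - 1 + 2*(p:ℕ) + 2*(q:ℕ)))
          = ∑ p : Fin (t+1), ∑ q : Fin (t+1),
            (v p * v q) * (1 / ((i : ℝ) + 2*(p:ℕ) + 2*(q:ℕ))) := by
        have h2 : ∀ p : Fin (t+1), IntervalIntegrable
            (fun x : ℝ => ∑ q : Fin (t+1), (v p * v q) * x^(i - 1 + 2*(p:ℕ) + 2*(q:ℕ)))
            volume 0 1 := fun p => by
          have heq : (fun x : ℝ => ∑ q : Fin (t+1), (v p * v q) * x^(i - 1 + 2*(p:ℕ) + 2*(q:ℕ)))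
              = ∑ q : Fin (t+1), fun x : ℝ => (v p * v q) * x^(i - 1 + 2*(p:ℕ) + 2*(q:ℕ)) := by
            funext x; rw [Finset.sum_apply]
          rw [heq]
          exact IntervalIntegrable.sum Finset.univ (fun q _ => hint p q)
        rw [intervalIntegral.integral_finset_sum
          (f := fun (p : Fin (t+1)) (x : ℝ) =>
            ∑ q : Fin (t+1), (v p * v q) * x^(i - 1 + 2*(p:ℕ) + 2*(q:ℕ)))
          (fun p _ => h2 p)]
        refine Finset.sum_congr rfl fun p _ => ?_
        rw [intervalIntegral.integral_finset_sum (fun q _ => hint p q)]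
        refine Finset.sum_congr rfl fun q _ => ?_
        rw [intervalIntegral.integral_const_mul, integral_pow, hcast p q]
        norm_num
      rw [step1]
      simp only [dotProduct, Matrix.mulVec, star_trivial, hM]
      refine Finset.sum_congr rfl fun p _ => ?_
      rw [Finset.mul_sum]
      refine Finset.sum_congr rfl fun q _ => ?_
      ring
    rw [key]
    -- the polynomial
    set P : Polynomial ℝ := ∑ p : Fin (t+1), Polynomial.C (v p) * Polynomial.X^(2*(p:ℕ)) with hP
    have hev : ∀ x : ℝ, P.eval x = ∑ p, v p * x^(2*(p:ℕ)) := by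
      intro x; simp [hP, Polynomial.eval_finset_sum]
    obtain ⟨p₀, hp₀⟩ := Function.ne_iff.mp hv
    have hPne : P ≠ 0 := by
      intro h
      apply hp₀
      have := congrArg (fun Q => Polynomial.coeff Q (2*(p₀:ℕ))) h
      simp only [hP, Polynomial.finset_sum_coeff, Polynomial.coeff_C_mul,
        Polynomial.coeff_X_pow, Polynomial.coeff_zero] at this
      rw [Finset.sum_eq_single p₀] at this
      · simpa using this
      · intro q _ hq
        have : 2*(p₀:ℕ) ≠ 2*(q:ℕ) := by
          simp only [ne_eq, Nat.mul_left_cancel_iff]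
          intro h'
          exact hq (Fin.ext (by omega))
        simp [this]
      · simp
    set f : ℝ → ℝ := fun x => x^(i-1) * (P.eval x)^2 with hf
    have hfeq : (fun x : ℝ => x^(i-1) * (∑ p, v p * x^(2*(p:ℕ)))^2) = f := by
      funext x; rw [hf]; simp [hev]
    rw [show (∫ x in (0:ℝ)..1, x^(i-1) * (∑ p, v p * x^(2*(p:ℕ)))^2) = ∫ x in (0:ℝ)..1, f x by
      rw [hfeq]]
    have hnonneg : 0 ≤ᵐ[volume.restrict (Set.uIoc (0:ℝ) 1)] f := by
      rw [Set.uIoc_of_le (by norm_num : (0:ℝ) ≤ 1)]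
      refine (ae_restrict_iff' measurableSet_Ioc).2 (ae_of_all _ fun x hx => ?_)
      have hx0 : (0:ℝ) ≤ x := le_of_lt hx.1
      positivity
    have hfi : IntervalIntegrable f volume 0 1 :=
      ((continuous_pow _).mul ((P.continuous_aeval.pow 2))).intervalIntegrable 0 1
    rw [intervalIntegral.integral_pos_iff_support_of_nonneg_ae' hnonneg hfi]
    refine ⟨by norm_num, ?_⟩
    have hsub : Set.Ioc (0:ℝ) 1 \ {x | P.IsRoot x} ⊆ Function.support f ∩ Set.Ioc 0 1 := by
      rintro x ⟨hx, hroot⟩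
      refine ⟨?_, hx⟩
      simp only [Function.mem_support, hf]
      have hx0 : (0:ℝ) < x := hx.1
      have h1 : x^(i-1) ≠ 0 := pow_ne_zero _ (ne_of_gt hx0)
      have h2 : P.eval x ≠ 0 := hroot
      positivity
    have hroots : volume {x : ℝ | P.IsRoot x} = 0 :=
      (Polynomial.finite_setOf_isRoot hPne).measure_zero _
    have : volume (Set.Ioc (0:ℝ) 1 \ {x | P.IsRoot x}) = 1 := by
      rw [measure_diff_null hroots, Real.volume_Ioc]
      norm_num
    calc (0 : ENNReal) < 1 := by norm_num
      _ = volume (Set.Ioc (0:ℝ) 1 \ {x | P.IsRoot x}) := this.symm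
      _ ≤ volume (Function.support f ∩ Set.Ioc 0 1) := measure_mono hsub
  exact hpos.det_pos
end

section
/- For any integer k ≥ 0, the determinant of the (k+1)×(k+1) matrix Ã_{k+1} with entries ã_{r,s} = (1 - (-1)^{r+s-1})/(2(r+s-1)) is positive. -/
open intervalIntegral Polynomial Matrix

theorem stmt_6 (k : ℕ) :
    0 < Matrix.det (fun r s : Fin (k + 1) =>
      (1 - (-1 : ℝ) ^ ((r : ℕ) + (s : ℕ) + 1)) / (2 * ((r : ℕ) + (s : ℕ) + 1))) := by
  set M : Matrix (Fin (k+1)) (Fin (k+1)) ℝ := fun r s =>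
      (1 - (-1 : ℝ) ^ ((r : ℕ) + (s : ℕ) + 1)) / (2 * ((r : ℕ) + (s : ℕ) + 1)) with hMdef
  have key : ∀ (r s : Fin (k+1)),
      M r s = (1/2) * ∫ t in (-1:ℝ)..1, t ^ ((r:ℕ) + (s:ℕ)) := by
    intro r s
    rw [integral_pow]
    simp only [hMdef]
    push_cast
    rw [one_pow]
    have h1 : ((r:ℕ):ℝ) + ((s:ℕ):ℝ) + 1 ≠ 0 := by positivity
    field_simp
  have hM : M.PosDef := by
    rw [Matrix.posDef_iff_dotProduct_mulVec]
    constructor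
    · ext r s
      rw [Matrix.conjTranspose_apply]
      simp only [Matrix.conjTranspose_apply, hMdef, star_trivial]
      rw [Nat.add_comm (s:ℕ) (r:ℕ)]
      ring_nf
    · intro x hx
      have hquad : dotProduct (star x) (M *ᵥ x)
          = (1/2) * ∫ t in (-1:ℝ)..1, (∑ i : Fin (k+1), x i * t ^ (i:ℕ)) ^ 2 := by
        have : ∀ t : ℝ, (∑ i : Fin (k+1), x i * t ^ (i:ℕ)) ^ 2
            = ∑ r : Fin (k+1), ∑ s : Fin (k+1), (x r * x s) * t ^ ((r:ℕ)+(s:ℕ)) := by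
          intro t
          rw [sq, Finset.sum_mul_sum]
          congr 1; ext r; congr 1; ext s
          rw [pow_add]; ring
        simp only [this]
        have hint : ∀ (r : Fin (k+1)), ∀ _ : r ∈ (Finset.univ : Finset (Fin (k+1))),
            IntervalIntegrable (fun t : ℝ => ∑ s : Fin (k+1), (x r * x s) * t ^ ((r:ℕ)+(s:ℕ)))
              MeasureTheory.volume (-1:ℝ) 1 := by
          intro r _
          apply Continuous.intervalIntegrable
          apply continuous_finset_sum
          intro s _
          continuity
        rw [intervalIntegral.integral_finset_sum hint, Finset.mul_sum]
        simp only [dotProduct, Matrix.mulVec, dotProduct, star_trivial,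
          Finset.mul_sum]
        congr 1; ext r
        rw [intervalIntegral.integral_finset_sum (fun s _ =>
          Continuous.intervalIntegrable (by continuity) _ _)]
        rw [Finset.mul_sum]
        refine Finset.sum_congr rfl fun s _ => ?_
        rw [intervalIntegral.integral_const_mul, key r s]
        ring
      rw [hquad]
      have hpos : 0 < ∫ t in (-1:ℝ)..1, (∑ i : Fin (k+1), x i * t ^ (i:ℕ)) ^ 2 := by
        apply intervalIntegral.integral_pos (by norm_num)
        · apply Continuous.continuousOn
          apply Continuous.pow
          apply continuous_finset_sum
          intro s _
          continuity
        · intro t _; positivity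
        · by_contra hc
          push_neg at hc
          set P : ℝ[X] := ∑ i : Fin (k+1), Polynomial.C (x i) * X ^ (i:ℕ) with hP
          have hPe : ∀ t : ℝ, P.eval t = ∑ i : Fin (k+1), x i * t ^ (i:ℕ) := by
            intro t; simp [hP, Polynomial.eval_finset_sum]
          have hroot : {t : ℝ | P.IsRoot t}.Infinite := by
            apply Set.Infinite.mono _ (Set.Icc_infinite (by norm_num : (-1:ℝ) < 1))
            intro t ht
            have := hc t ht
            have h0 : (∑ i : Fin (k+1), x i * t ^ (i:ℕ)) = 0 := by
              nlinarith [sq_nonneg (∑ i : Fin (k+1), x i * t ^ (i:ℕ))]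
            simp [Polynomial.IsRoot, hPe, h0]
          have hP0 : P = 0 := Polynomial.eq_zero_of_infinite_isRoot P hroot
          apply hx
          funext i
          have := congrArg (fun q => Polynomial.coeff q (i:ℕ)) hP0
          simp only [hP, Polynomial.finset_sum_coeff, Polynomial.coeff_C_mul,
            Polynomial.coeff_X_pow, Polynomial.coeff_zero] at this
          rw [Finset.sum_eq_single i] at this
          · simpa using this
          · intro j _ hj
            have h2 : (i:ℕ) ≠ (j:ℕ) := fun h => hj (Fin.ext h.symm)
            simp [h2]
          · simp
      positivity
  exact hM.det_pos
end

section
/- For any u ≥ 1, the u×u matrix B_u with entries (B_u)_{p,q} = 1/(2(p+q)-1) has positive determinant. -/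
open Polynomial MeasureTheory intervalIntegral

lemma quad_form_eq (u : ℕ) (x : Fin u → ℝ) :
    (∫ t in (0:ℝ)..1, (∑ p : Fin u, x p * t ^ (2 * (p:ℕ) + 1)) ^ 2) =
      ∑ q : Fin u, ∑ p : Fin u, x q * ((1 : ℝ) / (2 * ((q:ℕ) + (p:ℕ)) + 3) * x p) := by
  have h1 : ∀ t : ℝ, (∑ p : Fin u, x p * t ^ (2 * (p:ℕ) + 1)) ^ 2
      = ∑ q : Fin u, ∑ p : Fin u, (x q * x p) * t ^ (2 * (q:ℕ) + 2 * (p:ℕ) + 2) := by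
    intro t
    rw [sq, Finset.sum_mul_sum]
    apply Finset.sum_congr rfl; intro q _
    apply Finset.sum_congr rfl; intro p _
    ring
  simp_rw [h1]
  rw [intervalIntegral.integral_finset_sum]
  · apply Finset.sum_congr rfl; intro q _
    rw [intervalIntegral.integral_finset_sum]
    · apply Finset.sum_congr rfl; intro p _
      rw [intervalIntegral.integral_const_mul, integral_pow]
      rw [one_pow, zero_pow (by omega), sub_zero]
      push_cast
      ring
    · intro p _
      exact (Continuous.intervalIntegrable (by continuity) _ _)
  · intro q _
    exact (Continuous.intervalIntegrable (by continuity) _ _)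

lemma poly_ne_zero (u : ℕ) (x : Fin u → ℝ) (hx : x ≠ 0) :
    (∑ p : Fin u, C (x p) * X ^ (2 * (p:ℕ) + 1)) ≠ 0 := by
  intro h
  apply hx
  funext p₀
  have := congrArg (fun P => Polynomial.coeff P (2 * (p₀:ℕ) + 1)) h
  simp only [Polynomial.finset_sum_coeff, Polynomial.coeff_C_mul, Polynomial.coeff_X_pow,
    Polynomial.coeff_zero] at this
  rw [Finset.sum_eq_single p₀] at this
  · simpa using this
  · intro p _ hp
    have hne : ¬ (2 * (p₀:ℕ) + 1 = 2 * (p:ℕ) + 1) := by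
      intro h''
      exact hp (Fin.ext (by omega : (p:ℕ) = (p₀:ℕ)))
    simp [hne]
    exact fun h'' => absurd (Fin.ext h'').symm hp
  · intro h'; exact absurd (Finset.mem_univ p₀) h'

theorem stmt_7 (u : ℕ) (hu : 1 ≤ u) :
    0 < Matrix.det (fun p q : Fin u => (1 : ℝ) / (2 * ((p : ℕ) + (q : ℕ)) + 3)) := by
  apply Matrix.PosDef.det_pos
  apply Matrix.posDef_iff_dotProduct_mulVec.mpr
  constructor
  · -- Hermitian
    refine Matrix.IsHermitian.ext fun p q => ?_
    simp only [Matrix.conjTranspose_apply, star_trivial]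
    ring_nf
  · intro x hx
    set P : ℝ[X] := ∑ p : Fin u, C (x p) * X ^ (2 * (p:ℕ) + 1) with hP
    have hPne : P ≠ 0 := poly_ne_zero u x hx
    have heval : ∀ t : ℝ, P.eval t = ∑ p : Fin u, x p * t ^ (2 * (p:ℕ) + 1) := by
      intro t; simp [hP, Polynomial.eval_finset_sum]
    have hquad : dotProduct (star x)
        (Matrix.mulVec (fun p q : Fin u => (1 : ℝ) / (2 * ((p : ℕ) + (q : ℕ)) + 3)) x)
        = ∫ t in (0:ℝ)..1, (P.eval t) ^ 2 := by
      simp_rw [heval]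
      rw [quad_form_eq u x]
      simp [dotProduct, Matrix.mulVec, dotProduct, Finset.mul_sum]
    rw [hquad]
    have hroots : ({ t : ℝ | P.IsRoot t }).Finite := Polynomial.finite_setOf_isRoot hPne
    have hinf : (Set.Icc (0:ℝ) 1).Infinite := Set.Icc_infinite (by norm_num)
    obtain ⟨c, hc⟩ := (hinf.diff hroots).nonempty
    apply intervalIntegral.integral_pos (by norm_num)
    · exact (Continuous.continuousOn (by continuity))
    · intro t _; positivity
    · refine ⟨c, hc.1, ?_⟩
      have : P.eval c ≠ 0 := hc.2
      positivity
end

section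
/- For any v ≥ 1, the v×v matrix C_v with entries (C_v)_{p,q} = 1/(2(p+q)-3) has positive determinant. -/
open intervalIntegral Polynomial MeasureTheory Matrix in
theorem stmt_8 (v : ℕ) (hv : 1 ≤ v) :
    0 < Matrix.det (fun p q : Fin v => (1 : ℝ) / (2 * ((p : ℕ) + (q : ℕ)) + 1)) := by
  set M : Matrix (Fin v) (Fin v) ℝ :=
    fun p q : Fin v => (1 : ℝ) / (2 * ((p : ℕ) + (q : ℕ)) + 1) with hM
  have hpos : M.PosDef := by
    rw [Matrix.posDef_iff_dotProduct_mulVec]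
    constructor
    · ext p q
      rw [Matrix.conjTranspose_apply]
      simp only [hM, Matrix.conjTranspose_apply, star_trivial]
      push_cast
      ring_nf
    · intro x hx
      have key : dotProduct (star x) (M *ᵥ x) =
          ∫ t in (0:ℝ)..1, (∑ p : Fin v, x p * t ^ (2 * (p : ℕ))) ^ 2 := by
        have : ∀ t : ℝ, (∑ p : Fin v, x p * t ^ (2 * (p : ℕ))) ^ 2 =
            ∑ p : Fin v, ∑ q : Fin v,
              (x p * x q) * t ^ (2 * ((p : ℕ) + (q : ℕ))) := by
          intro t
          rw [sq, Finset.sum_mul_sum]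
          refine Finset.sum_congr rfl fun p _ => Finset.sum_congr rfl fun q _ => ?_
          ring
        simp_rw [this]
        rw [intervalIntegral.integral_finset_sum
          (f := fun p t => ∑ q : Fin v, x p * x q * t ^ (2 * ((p : ℕ) + (q : ℕ)))) (fun p _ => Continuous.intervalIntegrable
            (continuous_finset_sum _ fun q _ => continuous_const.mul (continuous_pow _)) 0 1)]
        rw [Finset.sum_congr rfl fun p _ => intervalIntegral.integral_finset_sum
          (f := fun q t => x p * x q * t ^ (2 * ((p : ℕ) + (q : ℕ)))) (fun q _ => Continuous.intervalIntegrable (continuous_const.mul (continuous_pow _)) 0 1)]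
        simp only [intervalIntegral.integral_const_mul, integral_pow]
        simp only [dotProduct, Matrix.mulVec, hM, star, one_pow, zero_pow,
          Pi.star_apply, star_trivial]
        rw [Finset.sum_comm]
        refine Finset.sum_congr rfl fun p _ => ?_
        rw [Finset.mul_sum]
        refine Finset.sum_congr rfl fun q _ => ?_
        have hne : (2 * ((q : ℕ) + (p : ℕ)) + 1 : ℝ) ≠ 0 := by positivity
        have hne' : (2 * ((p : ℕ) + (q : ℕ)) + 1 : ℝ) ≠ 0 := by positivity
        rw [zero_pow (by omega)]
        push_cast
        rw [add_comm ((q:ℕ):ℝ) ((p:ℕ):ℝ)] at hne ⊢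
        field_simp
        ring
      rw [key]
      -- the polynomial ∑ x p * X^(2p) is nonzero
      set P : Polynomial ℝ := ∑ p : Fin v, Polynomial.C (x p) * Polynomial.X ^ (2 * (p : ℕ))
        with hP
      have hPeval : ∀ t : ℝ, P.eval t = ∑ p : Fin v, x p * t ^ (2 * (p : ℕ)) := by
        intro t; simp [hP, Polynomial.eval_finset_sum]
      have hPne : P ≠ 0 := by
        intro h0
        apply hx
        funext p
        have := congrArg (Polynomial.coeff · (2 * (p : ℕ))) h0
        simp only [hP, Polynomial.finset_sum_coeff, Polynomial.coeff_C_mul,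
          Polynomial.coeff_X_pow, Polynomial.coeff_zero] at this
        rw [Finset.sum_eq_single p] at this
        · simpa using this
        · intro q _ hq
          have hpq : 2 * (p : ℕ) ≠ 2 * (q : ℕ) := fun h => hq (Fin.ext (by omega))
          simp [hpq]
        · simp
      obtain ⟨t0, ht0, ht0'⟩ :=
        (Set.Icc_infinite (by norm_num : (0:ℝ) < 1)).exists_notMem_finite
          (Polynomial.finite_setOf_isRoot hPne)
      refine intervalIntegral.integral_pos (by norm_num) ?_ (fun t _ => sq_nonneg _) ?_
      · exact (((continuous_finset_sum _ fun p _ => continuous_const.mul (continuous_pow _)).pow 2)).continuousOn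
      · refine ⟨t0, ht0, ?_⟩
        have : P.eval t0 ≠ 0 := ht0'
        rw [hPeval] at this
        positivity
  exact hpos.det_pos
end

section
/- Let f be (n+1)-times differentiable on [a,b], x₀ ∈ (a,b), and 0 ≤ k ≤ n. For ε > 0 with [x₀-ε, x₀+ε] ⊆ [a,b], let P_{k,ε}(x) = Σ_{i=0}^k a_{i,ε}(x-x₀)^i be the unique polynomial of degree ≤ k minimizing ∫_{x₀-ε}^{x₀+ε} (f(x) - P(x))² dx over all real polynomials P of degree ≤ k. Then for each 0 ≤ i ≤ k, a_{i,ε} → f^{(i)}(x₀)/i! as ε → 0⁺. -/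
open MeasureTheory intervalIntegral

lemma quad_zero {A B C : ℝ} (h : ∀ s : ℝ, A ≤ A - 2*s*B + s^2*C) : B = 0 := by
  have h' : ∀ s : ℝ, 2*s*B ≤ s^2*C := fun s => by linarith [h s]
  rcases le_or_gt C 0 with hC | hC
  · nlinarith [h' B, sq_nonneg B]
  · have h1 := h' (B/C)
    have hC' : C ≠ 0 := ne_of_gt hC
    have e1 : 2*(B/C)*B = 2*(B^2/C) := by ring
    have e2 : (B/C)^2*C = B^2/C := by field_simp
    rw [e1, e2] at h1
    have h2 : B^2/C ≤ 0 := by linarith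
    have h3 : B^2/C * C ≤ 0 := mul_nonpos_of_nonpos_of_nonneg h2 hC.le
    rw [div_mul_cancel₀ _ hC'] at h3
    have hB : B^2 = 0 := le_antisymm h3 (sq_nonneg B)
    exact pow_eq_zero_iff (by norm_num) |>.mp hB

noncomputable def hnum (p : ℕ) : ℝ := (1 - (-1:ℝ)^(p+1))/(p+1)

lemma hnum_eq_integral (p : ℕ) : hnum p = ∫ t in (-1:ℝ)..1, t^p := by
  rw [integral_pow, hnum, one_pow]

lemma moment (x₀ ε : ℝ) (p : ℕ) :
    (∫ x in (x₀-ε)..(x₀+ε), (x - x₀)^p) = ε^(p+1) * hnum p := by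
  have h := integral_comp_sub_right (a := x₀-ε) (b := x₀+ε) (fun u => u^p) x₀
  have h1 : x₀ - ε - x₀ = -ε := by ring
  have h2 : x₀ + ε - x₀ = ε := by ring
  rw [h1, h2] at h
  rw [h, integral_pow, hnum]
  have : (-ε)^(p+1) = (-1:ℝ)^(p+1) * ε^(p+1) := by rw [← neg_one_mul, mul_pow]
  rw [this]; ring

lemma step_bound {c d y₀ : ℝ} (hy₀ : y₀ ∈ Set.Icc c d) {g g' : ℝ → ℝ}
    (hg : ∀ x ∈ Set.Icc c d, HasDerivAt g (g' x) x)
    (hg' : ContinuousOn g' (Set.Icc c d))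
    (hg0 : g y₀ = 0) {C : ℝ} {p : ℕ}
    (hb : ∀ x ∈ Set.Icc c d, |g' x| ≤ C * |x - y₀| ^ p) :
    ∀ x ∈ Set.Icc c d, |g x| ≤ C * |x - y₀| ^ (p+1) / (p+1) := by
  intro x hx
  have hsub : Set.uIcc y₀ x ⊆ Set.Icc c d := Set.uIcc_subset_Icc hy₀ hx
  have hint : IntervalIntegrable g' volume y₀ x := (hg'.mono hsub).intervalIntegrable
  have hftc : ∫ t in y₀..x, g' t = g x - g y₀ :=
    integral_eq_sub_of_hasDerivAt (fun t ht => hg t (hsub ht)) hint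
  have hgx : g x = ∫ t in y₀..x, g' t := by rw [hftc, hg0, sub_zero]
  rcases le_total y₀ x with hle | hle
  · have habs : |∫ t in y₀..x, g' t| ≤ ∫ t in y₀..x, |g' t| := by
      simpa [Real.norm_eq_abs] using
        intervalIntegral.norm_integral_le_integral_norm (f := g') (μ := volume) hle
    have hmono : (∫ t in y₀..x, |g' t|) ≤ ∫ t in y₀..x, C*(t - y₀)^p := by
      apply intervalIntegral.integral_mono_on hle
      · exact ((hg'.mono hsub).abs).intervalIntegrable
      · exact (continuous_const.mul ((continuous_id.sub continuous_const).pow p)).intervalIntegrable _ _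
      · intro t ht
        have ht' : t ∈ Set.Icc c d := hsub (by
          rw [Set.uIcc_of_le hle]; exact ht)
        have := hb t ht'
        rwa [abs_of_nonneg (by linarith [ht.1] : (0:ℝ) ≤ t - y₀)] at this
    have hcomp : (∫ t in y₀..x, (t - y₀)^p) = (x - y₀)^(p+1)/(p+1) := by
      have h := integral_comp_sub_right (a := y₀) (b := x) (fun u => u^p) y₀
      rw [sub_self] at h
      rw [h, integral_pow, zero_pow (Nat.succ_ne_zero p), sub_zero]
    have hval : (∫ t in y₀..x, C*(t - y₀)^p) = C * (x - y₀)^(p+1)/(p+1) := by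
      rw [intervalIntegral.integral_const_mul, hcomp]; ring
    rw [hgx, abs_sub_comm x y₀, abs_of_nonpos (by linarith : y₀ - x ≤ 0)]
    calc |∫ t in y₀..x, g' t| ≤ ∫ t in y₀..x, C*(t - y₀)^p := le_trans habs hmono
      _ = C * (x - y₀)^(p+1)/(p+1) := hval
      _ = C * (-(y₀ - x))^(p+1)/(p+1) := by ring_nf
  · have hsymm : (∫ t in y₀..x, g' t) = -∫ t in x..y₀, g' t :=
      intervalIntegral.integral_symm x y₀
    have habs : |∫ t in x..y₀, g' t| ≤ ∫ t in x..y₀, |g' t| := by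
      simpa [Real.norm_eq_abs] using
        intervalIntegral.norm_integral_le_integral_norm (f := g') (μ := volume) hle
    have hsub' : Set.uIcc x y₀ ⊆ Set.Icc c d := by rwa [Set.uIcc_comm]
    have hmono : (∫ t in x..y₀, |g' t|) ≤ ∫ t in x..y₀, C*(y₀ - t)^p := by
      apply intervalIntegral.integral_mono_on hle
      · exact ((hg'.mono hsub').abs).intervalIntegrable
      · exact (continuous_const.mul ((continuous_const.sub continuous_id).pow p)).intervalIntegrable _ _
      · intro t ht
        have ht' : t ∈ Set.Icc c d := hsub' (by
          rw [Set.uIcc_of_le hle]; exact ht)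
        have := hb t ht'
        rwa [abs_sub_comm, abs_of_nonneg (by linarith [ht.2] : (0:ℝ) ≤ y₀ - t)] at this
    have hcomp : (∫ t in x..y₀, (y₀ - t)^p) = (y₀ - x)^(p+1)/(p+1) := by
      have h := integral_comp_sub_left (a := x) (b := y₀) (fun u => u^p) y₀
      rw [sub_self] at h
      rw [h, integral_pow, zero_pow (Nat.succ_ne_zero p), sub_zero]
    have hval : (∫ t in x..y₀, C*(y₀ - t)^p) = C * (y₀ - x)^(p+1)/(p+1) := by
      rw [intervalIntegral.integral_const_mul, hcomp]; ring
    rw [hgx, hsymm, abs_neg, abs_sub_comm x y₀,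
      abs_of_nonneg (by linarith : (0:ℝ) ≤ y₀ - x)]
    exact le_trans habs (hmono.trans_eq hval)

noncomputable def tayrem (f : ℝ → ℝ) (x₀ : ℝ) (k m : ℕ) : ℝ → ℝ :=
  fun x => iteratedDeriv m f x
    - ∑ l ∈ Finset.range (k+1-m), iteratedDeriv (m+l) f x₀ * (x-x₀)^l / l.factorial

lemma tayrem_x₀ (f : ℝ → ℝ) (x₀ : ℝ) (k m : ℕ) (hm : m ≤ k) :
    tayrem f x₀ k m x₀ = 0 := by
  have hN : k + 1 - m = (k - m) + 1 := by omega
  rw [tayrem, hN]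
  rw [Finset.sum_eq_single 0 (fun l _ hl => by
    rw [sub_self, zero_pow hl, mul_zero, zero_div]) (by simp)]
  simp

lemma tayrem_deriv {c d : ℝ} (f : ℝ → ℝ) (x₀ : ℝ) (k m : ℕ) (hm : m < k)
    (hdiff : ∀ l ≤ k, ∀ x ∈ Set.Icc c d,
      HasDerivAt (iteratedDeriv l f) (iteratedDeriv (l+1) f x) x)
    {x : ℝ} (hx : x ∈ Set.Icc c d) :
    HasDerivAt (tayrem f x₀ k m) (tayrem f x₀ k (m+1) x) x := by
  have h1 : HasDerivAt (iteratedDeriv m f) (iteratedDeriv (m+1) f x) x :=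
    hdiff m hm.le x hx
  have h2 : HasDerivAt
      (fun y => ∑ l ∈ Finset.range (k+1-m),
        iteratedDeriv (m+l) f x₀ * (y-x₀)^l / l.factorial)
      (∑ l ∈ Finset.range (k+1-m),
        iteratedDeriv (m+l) f x₀ * (l * (x-x₀)^(l-1)) / l.factorial) x := by
    apply HasDerivAt.fun_sum
    intro l _
    have hp : HasDerivAt (fun y => (y - x₀)^l) (l * (x-x₀)^(l-1)) x := by
      simpa using ((hasDerivAt_id x).sub_const x₀).fun_pow l
    have h3 : (fun y => iteratedDeriv (m+l) f x₀ * (y-x₀)^l / l.factorial)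
        = fun y => (iteratedDeriv (m+l) f x₀ / l.factorial) * (y-x₀)^l := by
      funext y; ring
    have h4 : iteratedDeriv (m+l) f x₀ * ((l:ℝ) * (x-x₀)^(l-1)) / l.factorial
        = (iteratedDeriv (m+l) f x₀ / l.factorial) * ((l:ℝ) * (x-x₀)^(l-1)) := by ring
    rw [h3, h4]
    exact hp.const_mul _
  have hsum : (∑ l ∈ Finset.range (k+1-m),
        iteratedDeriv (m+l) f x₀ * (l * (x-x₀)^(l-1)) / l.factorial)
      = ∑ l ∈ Finset.range (k+1-(m+1)),
        iteratedDeriv ((m+1)+l) f x₀ * (x-x₀)^l / l.factorial := by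
    have hN : k + 1 - m = (k - m - 1) + 1 + 1 := by omega
    have hN' : k + 1 - (m+1) = (k - m - 1) + 1 := by omega
    rw [hN, hN', Finset.sum_range_succ']
    simp only [Nat.cast_zero, pow_zero]
    rw [show (iteratedDeriv (m+0) f x₀ * (0 * (x-x₀)^(0-1)) / Nat.factorial 0) = 0 by simp]
    rw [add_zero]
    apply Finset.sum_congr rfl
    intro l _
    have hfac : ((l+1).factorial : ℝ) = (l+1) * l.factorial := by
      rw [Nat.factorial_succ]; push_cast; ring
    have hne : ((l:ℝ)+1) ≠ 0 := by positivity
    have hfne : ((l.factorial : ℝ)) ≠ 0 := Nat.cast_ne_zero.mpr (Nat.factorial_ne_zero l)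
    rw [show m + (l+1) = (m+1)+l by omega]
    push_cast [hfac]
    field_simp
  rw [tayrem]
  have h := h1.fun_sub h2
  rw [hsum] at h
  exact h

lemma tayrem_cont {c d : ℝ} (f : ℝ → ℝ) (x₀ : ℝ) (k m : ℕ) (hm : m ≤ k)
    (hdiff : ∀ l ≤ k, ∀ x ∈ Set.Icc c d,
      HasDerivAt (iteratedDeriv l f) (iteratedDeriv (l+1) f x) x) :
    ContinuousOn (tayrem f x₀ k m) (Set.Icc c d) := by
  apply ContinuousOn.sub
  · exact fun x hx => ((hdiff m hm x hx).continuousAt).continuousWithinAt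
  · apply Continuous.continuousOn
    apply continuous_finset_sum
    intro l _
    continuity

lemma taylor_bound {c d x₀ : ℝ} (hx₀ : x₀ ∈ Set.Icc c d) (k : ℕ) {f : ℝ → ℝ}
    (hdiff : ∀ l ≤ k, ∀ x ∈ Set.Icc c d,
      HasDerivAt (iteratedDeriv l f) (iteratedDeriv (l+1) f x) x)
    {δ : ℝ}
    (hδ : ∀ ξ ∈ Set.Icc c d, |iteratedDeriv k f ξ - iteratedDeriv k f x₀| ≤ δ) :
    ∀ x ∈ Set.Icc c d,
      |f x - ∑ l ∈ Finset.range (k+1), iteratedDeriv l f x₀ * (x-x₀)^l / l.factorial|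
        ≤ δ * |x - x₀|^k / k.factorial := by
  have claim : ∀ j, j ≤ k → ∀ x ∈ Set.Icc c d,
      |tayrem f x₀ k (k-j) x| ≤ δ * |x-x₀|^j / j.factorial := by
    intro j
    induction j with
    | zero =>
      intro _ x hx
      have : tayrem f x₀ k k x = iteratedDeriv k f x - iteratedDeriv k f x₀ := by
        rw [tayrem]; norm_num
      simpa [Nat.sub_self, this] using hδ x hx
    | succ j ih =>
      intro hj x hx
      have hm1 : k - (j+1) + 1 = k - j := by omega
      have hmlt : k - (j+1) < k := by omega
      have hstep := step_bound (C := δ / j.factorial) (p := j) hx₀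
        (fun y hy => tayrem_deriv f x₀ k (k-(j+1)) hmlt hdiff hy)
        ((tayrem_cont f x₀ k (k-(j+1)+1) (by omega) hdiff))
        (tayrem_x₀ f x₀ k (k-(j+1)) (by omega))
        (fun y hy => by
          rw [hm1]
          calc |tayrem f x₀ k (k-j) y| ≤ δ * |y-x₀|^j / j.factorial :=
                ih (by omega) y hy
            _ = δ / j.factorial * |y - x₀|^j := by ring)
        x hx
      have hfac : ((j+1).factorial : ℝ) = (j+1) * j.factorial := by
        rw [Nat.factorial_succ]; push_cast; ring
      calc |tayrem f x₀ k (k-(j+1)) x| ≤ δ / j.factorial * |x - x₀|^(j+1) / (j+1) := hstep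
        _ = δ * |x-x₀|^(j+1) / (j+1).factorial := by
            rw [hfac, div_mul_eq_mul_div, div_div, mul_comm ((j.factorial : ℝ)) ((j:ℝ)+1)]
  have := claim k le_rfl
  intro x hx
  have h0 : tayrem f x₀ k 0 x
      = f x - ∑ l ∈ Finset.range (k+1), iteratedDeriv l f x₀ * (x-x₀)^l / l.factorial := by
    rw [tayrem]
    simp
  simpa [Nat.sub_self, h0] using this x hx

lemma gram_mulVec_zero (k : ℕ) (v : Fin (k+1) → ℝ)
    (hv : (Matrix.of fun j i : Fin (k+1) => hnum ((i:ℕ)+(j:ℕ))).mulVec v = 0) : v = 0 := by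
  set P : Polynomial ℝ := ∑ i : Fin (k+1), Polynomial.C (v i) * Polynomial.X ^ (i:ℕ) with hPdef
  have hPeval : ∀ t : ℝ, P.eval t = ∑ i : Fin (k+1), v i * t^(i:ℕ) := by
    intro t; rw [hPdef, Polynomial.eval_finset_sum]; simp
  have key : (∫ t in (-1:ℝ)..1, (P.eval t)^2) = 0 := by
    have hexp : ∀ t : ℝ, (P.eval t)^2
        = ∑ j : Fin (k+1), ∑ i : Fin (k+1), (v j * v i) * t^((i:ℕ)+(j:ℕ)) := by
      intro t
      rw [hPeval, sq, Finset.sum_mul_sum]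
      apply Finset.sum_congr rfl; intro j _
      apply Finset.sum_congr rfl; intro i _
      rw [pow_add]; ring
    calc (∫ t in (-1:ℝ)..1, (P.eval t)^2)
        = ∫ t in (-1:ℝ)..1, ∑ j : Fin (k+1), ∑ i : Fin (k+1), (v j * v i) * t^((i:ℕ)+(j:ℕ)) := by
          simp_rw [hexp]
      _ = ∑ j : Fin (k+1), ∫ t in (-1:ℝ)..1, ∑ i : Fin (k+1), (v j * v i) * t^((i:ℕ)+(j:ℕ)) := by
          apply intervalIntegral.integral_finset_sum
          intro j _
          apply Continuous.intervalIntegrable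
          exact continuous_finset_sum _ fun i _ => continuous_const.mul (continuous_pow _)
      _ = ∑ j : Fin (k+1), ∑ i : Fin (k+1), ∫ t in (-1:ℝ)..1, (v j * v i) * t^((i:ℕ)+(j:ℕ)) := by
          apply Finset.sum_congr rfl; intro j _
          apply intervalIntegral.integral_finset_sum
          intro i _
          exact (continuous_const.mul (continuous_pow _)).intervalIntegrable _ _
      _ = ∑ j : Fin (k+1), v j * ((Matrix.of fun j i : Fin (k+1) =>
            hnum ((i:ℕ)+(j:ℕ))).mulVec v j) := by
          apply Finset.sum_congr rfl; intro j _
          rw [Matrix.mulVec, dotProduct, Finset.mul_sum]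
          apply Finset.sum_congr rfl; intro i _
          rw [intervalIntegral.integral_const_mul, ← hnum_eq_integral]
          simp [Matrix.of_apply]; ring
      _ = 0 := by rw [hv]; simp
  have hP0 : P = 0 := by
    by_contra hP
    have hfin : {t : ℝ | P.IsRoot t}.Finite := Polynomial.finite_setOf_isRoot hP
    have hint : IntervalIntegrable (fun t => (P.eval t)^2) MeasureTheory.volume (-1) 1 :=
      ((P.continuous_aeval).pow 2).intervalIntegrable _ _
    have hae := (intervalIntegral.integral_eq_zero_iff_of_le_of_nonneg_ae (by norm_num)
      (Filter.Eventually.of_forall fun t => sq_nonneg _) hint).mp key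
    have hS : MeasurableSet {t : ℝ | P.eval t ≠ 0} :=
      (P.continuous_aeval).measurable (measurableSet_singleton (0:ℝ)).compl
    have hnull : MeasureTheory.volume ({t : ℝ | P.eval t ≠ 0} ∩ Set.Ioc (-1:ℝ) 1) = 0 := by
      have h1 := MeasureTheory.ae_iff.mp hae
      have hset : {a : ℝ | ¬(fun t => Polynomial.eval t P ^ 2) a = (0:ℝ→ℝ) a}
          = {t : ℝ | Polynomial.eval t P ≠ 0} := by
        ext t; simp [sq_eq_zero_iff]
      rw [hset, MeasureTheory.Measure.restrict_apply hS] at h1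
      exact h1
    have hcover : Set.Ioc (-1:ℝ) 1 ⊆
        ({t : ℝ | P.eval t ≠ 0} ∩ Set.Ioc (-1:ℝ) 1) ∪ {t : ℝ | P.IsRoot t} := by
      intro t ht
      by_cases h : P.eval t = 0
      · exact Or.inr h
      · exact Or.inl ⟨h, ht⟩
    have hle := (MeasureTheory.measure_mono (μ := MeasureTheory.volume) hcover).trans (MeasureTheory.measure_union_le _ _)
    rw [hnull, hfin.measure_zero, zero_add] at hle
    rw [Real.volume_Ioc] at hle
    simp at hle
    linarith
  funext i
  have hco : P.coeff (i:ℕ) = v i := by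
    rw [hPdef, Polynomial.finset_sum_coeff]
    rw [Finset.sum_eq_single i]
    · simp
    · intro i' _ hne
      rw [Polynomial.coeff_C_mul, Polynomial.coeff_X_pow]
      have : (i:ℕ) ≠ (i':ℕ) := fun h => hne (Fin.ext h.symm)
      simp only [if_neg this, mul_zero]
    · simp
  rw [hP0] at hco
  simpa using hco.symm

lemma gram_isUnit (k : ℕ) :
    IsUnit (Matrix.of (fun j i : Fin (k+1) => hnum ((i:ℕ)+(j:ℕ))) :
      Matrix (Fin (k+1)) (Fin (k+1)) ℝ) := by
  rw [← Matrix.mulVec_injective_iff_isUnit]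
  intro x y hxy
  have := gram_mulVec_zero k (x - y) (by
    rw [Matrix.mulVec_sub, hxy, sub_self])
  exact sub_eq_zero.mp this

open MeasureTheory intervalIntegral

theorem stmt_9 (a b x₀ : ℝ) (hx₀ : x₀ ∈ Set.Ioo a b) (n k : ℕ) (hk : k ≤ n) (f : ℝ → ℝ)
    (hdiff : ∀ i ≤ n, ∀ x ∈ Set.Icc a b,
      HasDerivAt (iteratedDeriv i f) (iteratedDeriv (i + 1) f x) x)
    (coef : ℝ → Fin (k + 1) → ℝ)
    (hbest : ∀ ε : ℝ, 0 < ε → Set.Icc (x₀ - ε) (x₀ + ε) ⊆ Set.Icc a b →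
      ∀ Q : Polynomial ℝ, Q.degree ≤ k →
        (∫ x in (x₀ - ε)..(x₀ + ε),
            (f x - ∑ i : Fin (k + 1), coef ε i * (x - x₀) ^ (i : ℕ)) ^ 2) ≤
          ∫ x in (x₀ - ε)..(x₀ + ε), (f x - Q.eval x) ^ 2) :
    ∀ i : Fin (k + 1),
      Filter.Tendsto (fun ε => coef ε i) (nhdsWithin 0 (Set.Ioi 0))
        (nhds (iteratedDeriv (i : ℕ) f x₀ / (Nat.factorial (i : ℕ)))) := by
  intro i
  obtain ⟨ha, hbb⟩ := hx₀
  set H : Matrix (Fin (k+1)) (Fin (k+1)) ℝ :=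
    Matrix.of (fun j i' : Fin (k+1) => hnum ((i':ℕ)+(j:ℕ))) with hHdef
  have hHu : IsUnit H := gram_isUnit k
  have hHdet : IsUnit H.det := (Matrix.isUnit_iff_isUnit_det H).mp hHu
  have hinvmul : ∀ w : Fin (k+1) → ℝ, H⁻¹.mulVec (H.mulVec w) = w := by
    intro w
    rw [Matrix.mulVec_mulVec, Matrix.nonsing_inv_mul H hHdet, Matrix.one_mulVec]
  set K : ℝ := ∑ j : Fin (k+1), |H⁻¹ i j| with hKdef
  have hK0 : 0 ≤ K := Finset.sum_nonneg fun _ _ => abs_nonneg _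
  set ε₀ : ℝ := min (x₀ - a) (b - x₀) with hε₀def
  have hε₀pos : 0 < ε₀ := lt_min (by linarith) (by linarith)
  have hsubIcc : ∀ ε : ℝ, 0 < ε → ε ≤ ε₀ → Set.Icc (x₀-ε) (x₀+ε) ⊆ Set.Icc a b := by
    intro ε hε hεle x hx
    have h1 : ε ≤ x₀ - a := le_trans hεle (min_le_left _ _)
    have h2 : ε ≤ b - x₀ := le_trans hεle (min_le_right _ _)
    exact ⟨by linarith [hx.1], by linarith [hx.2]⟩
  have hfc : ContinuousOn f (Set.Icc a b) := by
    intro x hx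
    have := hdiff 0 (Nat.zero_le n) x hx
    rw [iteratedDeriv_zero] at this
    exact this.continuousAt.continuousWithinAt
  have hkfact : ((k.factorial : ℝ)) ≠ 0 := Nat.cast_ne_zero.mpr (Nat.factorial_ne_zero k)
  -- the key quantitative estimate
  have key : ∀ δ : ℝ, 0 ≤ δ → ∀ ε : ℝ, 0 < ε → ε ≤ ε₀ → ε ≤ 1 →
      (∀ ξ ∈ Set.Icc (x₀-ε) (x₀+ε), |iteratedDeriv k f ξ - iteratedDeriv k f x₀| ≤ δ) →
      |coef ε i - iteratedDeriv (i:ℕ) f x₀ / (Nat.factorial (i:ℕ))|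
        ≤ K * (2*δ/ k.factorial) := by
    intro δ hδ ε hε hεle hε1 hδbound
    have hεne : ε ≠ 0 := ne_of_gt hε
    have hlohi : x₀ - ε ≤ x₀ + ε := by linarith
    have hIsub : Set.Icc (x₀-ε) (x₀+ε) ⊆ Set.Icc a b := hsubIcc ε hε hεle
    have hx₀mem : x₀ ∈ Set.Icc (x₀-ε) (x₀+ε) := ⟨by linarith, by linarith⟩
    have huIcc : Set.uIcc (x₀-ε) (x₀+ε) = Set.Icc (x₀-ε) (x₀+ε) := Set.uIcc_of_le hlohi
    have hfc' : ContinuousOn f (Set.Icc (x₀-ε) (x₀+ε)) := hfc.mono hIsub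
    set P : ℝ → ℝ := fun x => ∑ i' : Fin (k+1), coef ε i' * (x - x₀) ^ (i' : ℕ) with hPdef
    have hPc : Continuous P := by
      apply continuous_finset_sum
      intro i' _
      exact continuous_const.mul ((continuous_id.sub continuous_const).pow _)
    have hFc : ContinuousOn (fun x => f x - P x) (Set.Icc (x₀-ε) (x₀+ε)) :=
      hfc'.sub hPc.continuousOn
    -- orthogonality
    have horth : ∀ j : Fin (k+1),
        (∫ x in (x₀-ε)..(x₀+ε), (f x - P x) * (x - x₀)^(j:ℕ)) = 0 := by
      intro j
      have hdegterm : ∀ (c : ℝ) (m : ℕ), m ≤ k →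
          (Polynomial.C c * (Polynomial.X - Polynomial.C x₀)^m).degree ≤ (k : WithBot ℕ) := by
        intro c m hm
        calc (Polynomial.C c * (Polynomial.X - Polynomial.C x₀)^m).degree
            ≤ (Polynomial.C c).degree + ((Polynomial.X - Polynomial.C x₀)^m).degree :=
              Polynomial.degree_mul_le _ _
          _ ≤ 0 + (m : WithBot ℕ) := by
              apply add_le_add Polynomial.degree_C_le
              simpa [Polynomial.degree_X_sub_C] using
                Polynomial.degree_pow_le (Polynomial.X - Polynomial.C x₀) m
          _ ≤ (k : WithBot ℕ) := by
              rw [zero_add]; exact_mod_cast Nat.cast_le.mpr hm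
      set u : ℝ → ℝ := fun x => (x - x₀)^(j:ℕ) with hudef
      have huc : Continuous u := (continuous_id.sub continuous_const).pow _
      have i2 : IntervalIntegrable (fun x => (f x - P x) * u x) volume (x₀-ε) (x₀+ε) := by
        apply ContinuousOn.intervalIntegrable
        rw [huIcc]; exact hFc.mul huc.continuousOn
      have i1 : IntervalIntegrable (fun x => (f x - P x)^2) volume (x₀-ε) (x₀+ε) := by
        apply ContinuousOn.intervalIntegrable
        rw [huIcc]; exact hFc.pow 2
      have i3 : IntervalIntegrable (fun x => (u x)^2) volume (x₀-ε) (x₀+ε) :=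
        ((huc.pow 2)).intervalIntegrable _ _
      apply quad_zero (A := ∫ x in (x₀-ε)..(x₀+ε), (f x - P x)^2)
        (C := ∫ x in (x₀-ε)..(x₀+ε), (u x)^2)
      intro s
      set Q : Polynomial ℝ :=
        (∑ i' : Fin (k+1), Polynomial.C (coef ε i') * (Polynomial.X - Polynomial.C x₀)^(i':ℕ))
          + Polynomial.C s * (Polynomial.X - Polynomial.C x₀)^(j:ℕ) with hQdef
      have hQdeg : Q.degree ≤ (k : WithBot ℕ) := by
        apply le_trans (Polynomial.degree_add_le _ _)
        apply max_le
        · apply le_trans (Polynomial.degree_sum_le _ _)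
          apply Finset.sup_le
          intro i' _
          exact hdegterm _ _ (Nat.lt_succ_iff.mp i'.isLt)
        · exact hdegterm _ _ (Nat.lt_succ_iff.mp j.isLt)
      have hQeval : ∀ x : ℝ, Q.eval x = P x + s * u x := by
        intro x
        rw [hQdef]
        simp [Polynomial.eval_finset_sum, hPdef, hudef]
      have hb := hbest ε hε hIsub Q hQdeg
      have hrhs : (∫ x in (x₀-ε)..(x₀+ε), (f x - Q.eval x)^2)
          = (∫ x in (x₀-ε)..(x₀+ε), (f x - P x)^2)
            - 2*s*(∫ x in (x₀-ε)..(x₀+ε), (f x - P x) * u x)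
            + s^2*(∫ x in (x₀-ε)..(x₀+ε), (u x)^2) := by
        have hpt : (fun x => (f x - Q.eval x)^2)
            = fun x => ((f x - P x)^2 - (2*s)*((f x - P x) * u x)) + s^2*(u x)^2 := by
          funext x; rw [hQeval]; ring
        rw [hpt, intervalIntegral.integral_add (i1.sub (i2.const_mul (2*s)))
            (i3.const_mul (s^2)),
          intervalIntegral.integral_sub i1 (i2.const_mul (2*s)),
          intervalIntegral.integral_const_mul, intervalIntegral.integral_const_mul]
      rw [hrhs] at hb
      convert hb using 1 <;> ring
    -- the linear system
    set cvec : Fin (k+1) → ℝ := fun i' => coef ε i' * ε^(i':ℕ) with hcvec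
    set Tv : Fin (k+1) → ℝ :=
      fun l => iteratedDeriv (l:ℕ) f x₀ * ε^(l:ℕ) / (Nat.factorial (l:ℕ)) with hTv
    set Tfun : ℝ → ℝ :=
      fun x => ∑ l ∈ Finset.range (k+1), iteratedDeriv l f x₀ * (x-x₀)^l / l.factorial
      with hTfun
    have hTfc : Continuous Tfun := by
      apply continuous_finset_sum
      intro l _
      exact (continuous_const.mul ((continuous_id.sub continuous_const).pow _)).div_const _
    have hsys : ∀ j : Fin (k+1), H.mulVec cvec j
        = (∫ x in (x₀-ε)..(x₀+ε), f x * (x - x₀)^(j:ℕ)) / ε^((j:ℕ)+1) := by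
      intro j
      have hif : IntervalIntegrable (fun x => f x * (x - x₀)^(j:ℕ)) volume (x₀-ε) (x₀+ε) := by
        apply ContinuousOn.intervalIntegrable
        rw [huIcc]
        exact hfc'.mul ((continuous_id.sub continuous_const).pow _).continuousOn
      have hiP : IntervalIntegrable (fun x => P x * (x - x₀)^(j:ℕ)) volume (x₀-ε) (x₀+ε) :=
        (hPc.mul ((continuous_id.sub continuous_const).pow _)).intervalIntegrable _ _
      have hsplit : (∫ x in (x₀-ε)..(x₀+ε), f x * (x - x₀)^(j:ℕ))
          = ∫ x in (x₀-ε)..(x₀+ε), P x * (x - x₀)^(j:ℕ) := by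
        have h0 := horth j
        have : (fun x => (f x - P x) * (x - x₀)^(j:ℕ))
            = fun x => f x * (x - x₀)^(j:ℕ) - P x * (x - x₀)^(j:ℕ) := by
          funext x; ring
        rw [this, intervalIntegral.integral_sub hif hiP] at h0
        linarith
      have hPint : (∫ x in (x₀-ε)..(x₀+ε), P x * (x - x₀)^(j:ℕ))
          = ∑ i' : Fin (k+1), coef ε i' * (ε^((i':ℕ)+(j:ℕ)+1) * hnum ((i':ℕ)+(j:ℕ))) := by
        have hpt : (fun x => P x * (x - x₀)^(j:ℕ))
            = fun x => ∑ i' : Fin (k+1), coef ε i' * (x - x₀)^((i':ℕ)+(j:ℕ)) := by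
          funext x
          rw [hPdef, Finset.sum_mul]
          apply Finset.sum_congr rfl
          intro i' _
          rw [pow_add]; ring
        rw [hpt, intervalIntegral.integral_finset_sum]
        · apply Finset.sum_congr rfl
          intro i' _
          rw [intervalIntegral.integral_const_mul, moment]
        · intro i' _
          exact (continuous_const.mul
            ((continuous_id.sub continuous_const).pow _)).intervalIntegrable _ _
      rw [hsplit, hPint, Finset.sum_div]
      rw [Matrix.mulVec, dotProduct]
      apply Finset.sum_congr rfl
      intro i' _
      rw [hHdef, hcvec]
      simp only [Matrix.of_apply]
      rw [pow_add, pow_add]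
      field_simp
      ring
    have hTsys : ∀ j : Fin (k+1), H.mulVec Tv j
        = (∫ x in (x₀-ε)..(x₀+ε), Tfun x * (x - x₀)^(j:ℕ)) / ε^((j:ℕ)+1) := by
      intro j
      have hTint : (∫ x in (x₀-ε)..(x₀+ε), Tfun x * (x - x₀)^(j:ℕ))
          = ∑ l ∈ Finset.range (k+1),
              (iteratedDeriv l f x₀ / l.factorial) * (ε^(l+(j:ℕ)+1) * hnum (l+(j:ℕ))) := by
        have hpt : (fun x => Tfun x * (x - x₀)^(j:ℕ))
            = fun x => ∑ l ∈ Finset.range (k+1),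
                (iteratedDeriv l f x₀ / l.factorial) * (x - x₀)^(l+(j:ℕ)) := by
          funext x
          rw [hTfun, Finset.sum_mul]
          apply Finset.sum_congr rfl
          intro l _
          rw [pow_add]; ring
        rw [hpt, intervalIntegral.integral_finset_sum]
        · apply Finset.sum_congr rfl
          intro l _
          rw [intervalIntegral.integral_const_mul, moment]
        · intro l _
          exact (continuous_const.mul
            ((continuous_id.sub continuous_const).pow _)).intervalIntegrable _ _
      rw [hTint, Finset.sum_div]
      rw [Matrix.mulVec, dotProduct]
      rw [← Fin.sum_univ_eq_sum_range (fun l =>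
        (iteratedDeriv l f x₀ / l.factorial) * (ε^(l+(j:ℕ)+1) * hnum (l+(j:ℕ))) / ε^((j:ℕ)+1))
        (k+1)]
      apply Finset.sum_congr rfl
      intro l _
      rw [hHdef, hTv]
      simp only [Matrix.of_apply]
      rw [pow_add, pow_add]
      have hlf : ((Nat.factorial (l:ℕ) : ℝ)) ≠ 0 := Nat.cast_ne_zero.mpr (Nat.factorial_ne_zero _)
      field_simp
      ring
    -- Taylor bound
    have hdiff' : ∀ l ≤ k, ∀ x ∈ Set.Icc (x₀-ε) (x₀+ε),
        HasDerivAt (iteratedDeriv l f) (iteratedDeriv (l+1) f x) x :=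
      fun l hl x hx => hdiff l (le_trans hl hk) x (hIsub hx)
    have htay := taylor_bound hx₀mem k hdiff' hδbound
    -- error bound
    have herr : ∀ j : Fin (k+1),
        |H.mulVec cvec j - H.mulVec Tv j| ≤ 2*δ*ε^k / k.factorial := by
      intro j
      rw [hsys j, hTsys j, div_sub_div_same]
      have hif : IntervalIntegrable (fun x => f x * (x - x₀)^(j:ℕ)) volume (x₀-ε) (x₀+ε) := by
        apply ContinuousOn.intervalIntegrable
        rw [huIcc]
        exact hfc'.mul ((continuous_id.sub continuous_const).pow _).continuousOn
      have hiT : IntervalIntegrable (fun x => Tfun x * (x - x₀)^(j:ℕ)) volume (x₀-ε) (x₀+ε) :=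
        (hTfc.mul ((continuous_id.sub continuous_const).pow _)).intervalIntegrable _ _
      rw [← intervalIntegral.integral_sub hif hiT]
      have hbnd : ∀ x ∈ Set.uIoc (x₀-ε) (x₀+ε),
          ‖f x * (x - x₀)^(j:ℕ) - Tfun x * (x - x₀)^(j:ℕ)‖ ≤ (δ*ε^k/k.factorial) * ε^(j:ℕ) := by
        intro x hx
        have hxI : x ∈ Set.Icc (x₀-ε) (x₀+ε) := by
          rw [Set.uIoc_of_le hlohi] at hx
          exact ⟨hx.1.le, hx.2⟩
        have h1 : |f x - Tfun x| ≤ δ * |x-x₀|^k / k.factorial := htay x hxI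
        have hxd : |x - x₀| ≤ ε := by
          rw [abs_le]; constructor <;> [linarith [hxI.1]; linarith [hxI.2]]
        have h2 : |x - x₀|^k ≤ ε^k := pow_le_pow_left₀ (abs_nonneg _) hxd k
        have h3 : |(x - x₀)^(j:ℕ)| ≤ ε^(j:ℕ) := by
          rw [abs_pow]; exact pow_le_pow_left₀ (abs_nonneg _) hxd _
        have : f x * (x - x₀)^(j:ℕ) - Tfun x * (x - x₀)^(j:ℕ)
            = (f x - Tfun x) * (x - x₀)^(j:ℕ) := by ring
        rw [this, Real.norm_eq_abs, abs_mul]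
        apply mul_le_mul _ h3 (abs_nonneg _) (by positivity)
        calc |f x - Tfun x| ≤ δ * |x-x₀|^k / k.factorial := h1
          _ ≤ δ * ε^k / k.factorial := by
              apply div_le_div_of_nonneg_right ?_ ?_ |>.trans_eq rfl
              · exact mul_le_mul_of_nonneg_left h2 hδ
              · positivity
      have hnormint := intervalIntegral.norm_integral_le_of_norm_le_const hbnd
      have habs2 : |(x₀+ε) - (x₀-ε)| = 2*ε := by
        rw [abs_of_nonneg (by linarith)]; ring
      rw [habs2] at hnormint
      rw [abs_div, abs_of_nonneg (by positivity : (0:ℝ) ≤ ε^((j:ℕ)+1))]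
      rw [div_le_iff₀ (by positivity : (0:ℝ) < ε^((j:ℕ)+1))]
      calc |∫ x in (x₀-ε)..(x₀+ε), (f x * (x - x₀)^(j:ℕ) - Tfun x * (x - x₀)^(j:ℕ))|
          ≤ (δ*ε^k/k.factorial) * ε^(j:ℕ) * (2*ε) := by
            simpa [Real.norm_eq_abs] using hnormint
        _ = (2*δ*ε^k / k.factorial) * ε^((j:ℕ)+1) := by rw [pow_succ]; ring
    -- combine
    have hcT : cvec - Tv = H⁻¹.mulVec (H.mulVec cvec - H.mulVec Tv) := by
      rw [← Matrix.mulVec_sub, hinvmul]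
    have hwi : |(cvec - Tv) i| ≤ K * (2*δ*ε^k / k.factorial) := by
      rw [hcT]
      rw [Matrix.mulVec, dotProduct]
      calc |∑ j : Fin (k+1), H⁻¹ i j * (H.mulVec cvec - H.mulVec Tv) j|
          ≤ ∑ j : Fin (k+1), |H⁻¹ i j * (H.mulVec cvec - H.mulVec Tv) j| :=
            Finset.abs_sum_le_sum_abs _ _
        _ ≤ ∑ j : Fin (k+1), |H⁻¹ i j| * (2*δ*ε^k / k.factorial) := by
            apply Finset.sum_le_sum
            intro j _
            rw [abs_mul]
            exact mul_le_mul_of_nonneg_left (by simpa using herr j) (abs_nonneg _)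
        _ = K * (2*δ*ε^k / k.factorial) := by rw [hKdef, Finset.sum_mul]
    have hwieq : (cvec - Tv) i = (coef ε i - iteratedDeriv (i:ℕ) f x₀ / (Nat.factorial (i:ℕ)))
        * ε^(i:ℕ) := by
      rw [Pi.sub_apply, hcvec, hTv]
      have : ((Nat.factorial (i:ℕ) : ℝ)) ≠ 0 := Nat.cast_ne_zero.mpr (Nat.factorial_ne_zero _)
      field_simp
    have hεik : ε^k ≤ ε^(i:ℕ) := by
      apply pow_le_pow_of_le_one hε.le hε1 (Nat.lt_succ_iff.mp i.isLt)
    rw [hwieq] at hwi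
    rw [abs_mul, abs_of_nonneg (by positivity : (0:ℝ) ≤ ε^(i:ℕ))] at hwi
    have hεipos : (0:ℝ) < ε^(i:ℕ) := by positivity
    rw [← le_div_iff₀ hεipos] at hwi
    apply hwi.trans
    rw [div_le_iff₀ hεipos]
    calc K * (2*δ*ε^k / k.factorial) ≤ K * (2*δ*ε^(i:ℕ) / k.factorial) := by
          apply mul_le_mul_of_nonneg_left _ hK0
          apply div_le_div_of_nonneg_right ?_ ?_ |>.trans_eq rfl
          · exact mul_le_mul_of_nonneg_left hεik (by positivity)
          · positivity
      _ = K * (2*δ/ k.factorial) * ε^(i:ℕ) := by ring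
  -- conclusion via ε-δ
  rw [Metric.tendsto_nhdsWithin_nhds]
  intro δ' hδ'
  set δ : ℝ := δ' * k.factorial / (2*(K+1)) with hδdef
  have hδpos : 0 < δ := by
    apply div_pos (mul_pos hδ' (by positivity)) (by linarith)
  have hcont : ContinuousAt (iteratedDeriv k f) x₀ :=
    (hdiff k hk x₀ ⟨ha.le, hbb.le⟩).continuousAt
  rcases Metric.continuousAt_iff.mp hcont δ hδpos with ⟨η, hη, hηball⟩
  refine ⟨min η (min ε₀ 1), by positivity, ?_⟩
  intro ε hεIoi hεdist
  have hε : (0:ℝ) < ε := hεIoi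
  rw [Real.dist_eq, sub_zero, abs_of_pos hε] at hεdist
  have hεη : ε < η := lt_of_lt_of_le hεdist (min_le_left _ _)
  have hεε₀ : ε ≤ ε₀ := le_trans hεdist.le ((min_le_right _ _).trans (min_le_left _ _))
  have hε1 : ε ≤ 1 := le_trans hεdist.le ((min_le_right _ _).trans (min_le_right _ _))
  have hδbound : ∀ ξ ∈ Set.Icc (x₀-ε) (x₀+ε),
      |iteratedDeriv k f ξ - iteratedDeriv k f x₀| ≤ δ := by
    intro ξ hξ
    rcases eq_or_ne ξ x₀ with rfl | hne
    · simpa using hδpos.le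
    · have : dist ξ x₀ < η := by
        rw [Real.dist_eq]
        have : |ξ - x₀| ≤ ε := by
          rw [abs_le]; constructor <;> [linarith [hξ.1]; linarith [hξ.2]]
        linarith
      have := hηball this
      rw [Real.dist_eq] at this
      exact this.le
  have hest := key δ hδpos.le ε hε hεε₀ hε1 hδbound
  rw [Real.dist_eq]
  apply lt_of_le_of_lt hest
  rw [hδdef]
  have h1 : K * (2 * (δ' * ↑k.factorial / (2 * (K + 1))) / ↑k.factorial)
      = δ' * (K / (K+1)) := by
    field_simp
  rw [h1]
  have h2 : K / (K+1) < 1 := by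
    rw [div_lt_one (by linarith)]; linarith
  calc δ' * (K / (K+1)) < δ' * 1 := by
        apply mul_lt_mul_of_pos_left h2 hδ'
    _ = δ' := mul_one _
end

section
/- Let A_{k+1}(ε) be the (k+1)×(k+1) matrix with entries a_{r,s} = (ε^{r+s-1}-(-ε)^{r+s-1})/(r+s-1) for ε > 0. Then each entry of the inverse A_{k+1}(ε)^{-1} at position (r,s) equals α_{r,s}·ε^{-(r+s-1)} for some real number α_{r,s} independent of ε. Moreover α_{r,s} = 0 whenever r+s is odd. -/
open Matrix

theorem stmt_13 (k : ℕ) :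
    ∃ α : Fin (k + 1) → Fin (k + 1) → ℝ,
      ∀ r s : Fin (k + 1),
        (∀ ε : ℝ, 0 < ε →
          (Matrix.of (fun r s : Fin (k + 1) =>
            (ε ^ ((r : ℕ) + (s : ℕ) + 1) - (-ε) ^ ((r : ℕ) + (s : ℕ) + 1)) /
              ((r : ℕ) + (s : ℕ) + 1)))⁻¹ r s = α r s / ε ^ ((r : ℕ) + (s : ℕ) + 1)) ∧
        (Odd ((r : ℕ) + (s : ℕ)) → α r s = 0) := by
  set A1 : Matrix (Fin (k+1)) (Fin (k+1)) ℝ :=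
    Matrix.of (fun r s : Fin (k + 1) =>
      ((1:ℝ) - (-1:ℝ) ^ ((r : ℕ) + (s : ℕ) + 1)) /
        ((r : ℕ) + (s : ℕ) + 1)) with hA1
  refine ⟨fun r s => A1⁻¹ r s, fun r s => ⟨fun ε hε => ?_, fun hodd => ?_⟩⟩
  · set d : Fin (k+1) → ℝ := fun r => ε ^ (r:ℕ) * Real.sqrt ε with hd
    have hd_ne : ∀ r : Fin (k+1), d r ≠ 0 := fun r =>
      mul_ne_zero (pow_ne_zero _ (ne_of_gt hε)) (ne_of_gt (Real.sqrt_pos.mpr hε))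
    have hdd : ∀ r s : Fin (k+1), d r * d s = ε ^ ((r:ℕ) + (s:ℕ) + 1) := by
      intro r s
      have h := Real.mul_self_sqrt hε.le
      calc d r * d s = ε ^ (r:ℕ) * ε ^ (s:ℕ) * (Real.sqrt ε * Real.sqrt ε) := by
            simp only [hd]; ring
        _ = ε ^ ((r:ℕ) + (s:ℕ) + 1) := by rw [h, ← pow_add, ← pow_succ]
    have key : (Matrix.of (fun r s : Fin (k + 1) =>
            (ε ^ ((r : ℕ) + (s : ℕ) + 1) - (-ε) ^ ((r : ℕ) + (s : ℕ) + 1)) /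
              ((r : ℕ) + (s : ℕ) + 1)))
        = Matrix.diagonal d * A1 * Matrix.diagonal d := by
      ext i j
      rw [Matrix.mul_diagonal, Matrix.diagonal_mul]
      simp only [hA1, Matrix.of_apply]
      rw [neg_pow, ← hdd i j]
      ring
    have hDinv : (Matrix.diagonal d)⁻¹ = Matrix.diagonal (fun r => (d r)⁻¹) := by
      apply Matrix.inv_eq_right_inv
      rw [Matrix.diagonal_mul_diagonal]
      have : (fun i : Fin (k+1) => d i * (d i)⁻¹) = fun _ => (1:ℝ) := by
        funext i; exact mul_inv_cancel₀ (hd_ne i)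
      rw [this, Matrix.diagonal_one]
    rw [key, Matrix.mul_inv_rev, Matrix.mul_inv_rev, hDinv,
      Matrix.diagonal_mul, Matrix.mul_diagonal, ← hdd r s]
    field_simp
  · set S : Matrix (Fin (k+1)) (Fin (k+1)) ℝ :=
      Matrix.diagonal (fun r : Fin (k+1) => (-1:ℝ) ^ (r:ℕ)) with hS
    have hSS : S * S = 1 := by
      rw [hS, Matrix.diagonal_mul_diagonal]
      have : (fun i : Fin (k+1) => (-1:ℝ) ^ (i:ℕ) * (-1:ℝ) ^ (i:ℕ)) = fun _ => (1:ℝ) := by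
        funext i; rw [← pow_add]; exact Even.neg_one_pow ⟨(i:ℕ), rfl⟩
      rw [this, Matrix.diagonal_one]
    have hSinv : S⁻¹ = S := Matrix.inv_eq_right_inv hSS
    have hSA : S * A1 * S = A1 := by
      ext i j
      rw [Matrix.mul_diagonal, Matrix.diagonal_mul]
      simp only [hA1, Matrix.of_apply]
      rcases Nat.even_or_odd ((i:ℕ) + (j:ℕ)) with h | h
      · have : (-1:ℝ) ^ (i:ℕ) * (-1:ℝ) ^ (j:ℕ) = 1 := by
          rw [← pow_add]; exact Even.neg_one_pow h
        calc (-1:ℝ) ^ (i:ℕ) * (((1:ℝ) - (-1:ℝ) ^ ((i:ℕ)+(j:ℕ)+1)) / ((i:ℕ)+(j:ℕ)+1)) *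
              (-1:ℝ) ^ (j:ℕ)
            = ((-1:ℝ) ^ (i:ℕ) * (-1:ℝ) ^ (j:ℕ)) *
              (((1:ℝ) - (-1:ℝ) ^ ((i:ℕ)+(j:ℕ)+1)) / ((i:ℕ)+(j:ℕ)+1)) := by ring
          _ = _ := by rw [this, one_mul]
      · have : ((1:ℝ) - (-1:ℝ) ^ ((i:ℕ)+(j:ℕ)+1)) = 0 := by
          rw [Even.neg_one_pow h.add_one]; ring
        rw [this]
        simp
    have h2 : A1⁻¹ = S * A1⁻¹ * S := by
      conv_lhs => rw [← hSA]
      rw [Matrix.mul_inv_rev, Matrix.mul_inv_rev, hSinv, Matrix.mul_assoc]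
    have h3 : A1⁻¹ r s = (-1:ℝ) ^ (r:ℕ) * A1⁻¹ r s * (-1:ℝ) ^ (s:ℕ) := by
      conv_lhs => rw [h2]
      rw [Matrix.mul_diagonal, Matrix.diagonal_mul]
    have h4 : (-1:ℝ) ^ (r:ℕ) * ((-1:ℝ) ^ (s:ℕ)) = -1 := by
      rw [← pow_add]; exact Odd.neg_one_pow hodd
    have : A1⁻¹ r s = - A1⁻¹ r s := by
      nth_rewrite 1 [h3]
      rw [show (-1:ℝ) ^ (r:ℕ) * A1⁻¹ r s * (-1:ℝ) ^ (s:ℕ)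
          = ((-1:ℝ) ^ (r:ℕ) * (-1:ℝ) ^ (s:ℕ)) * A1⁻¹ r s from by ring, h4]
      ring
    linarith
end
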